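/- For every integer n ≥ 2, over the field F_5 one has the factorization x^{2^n} + 1 = (x^{2^{n−1}} + 2)·(x^{2^{n−1}} + 3), and both factors are irreducible over F_5. -/

import Mathlib

open Polynomial IntermediateField

lemma five_pow_two_pow (j : ℕ) : ∃ u : ℕ, Odd u ∧ 5 ^ (2 ^ j) = 1 + 2 ^ (j + 2) * u := by
  induction j with
  | zero => exact ⟨1, odd_one, rfl⟩
  | succ j ih =>
    obtain ⟨u, hu, h⟩ := ih
    refine ⟨u + 2 ^ (j + 1) * u ^ 2, hu.add_even (by simp [Nat.even_mul, pow_succ]) , ?_⟩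
    have : (5:ℕ) ^ 2 ^ (j + 1) = (5 ^ 2 ^ j) ^ 2 := by rw [← pow_mul, pow_succ]
    rw [this, h]
    ring

lemma two_pow_dvd_of_dvd {m d : ℕ} (hd : (5 : ZMod (2 ^ (m + 2))) ^ d = 1) : 2 ^ m ∣ d := by
  have key : ∀ k : ℕ, (5 : ZMod (2 ^ (m + 2))) ^ k = 1 ↔ (2:ℕ) ^ (m + 2) ∣ 5 ^ k - 1 := by
    intro k
    have h1 : (1:ℕ) ≤ 5 ^ k := Nat.one_le_pow _ _ (by norm_num)
    rw [← Nat.modEq_iff_dvd' h1]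
    constructor
    · intro h
      have : ((5 ^ k : ℕ) : ZMod (2 ^ (m + 2))) = ((1 : ℕ) : ZMod (2 ^ (m + 2))) := by
        push_cast; simpa using h
      exact ((ZMod.natCast_eq_natCast_iff _ _ _).1 this).symm
    · intro h
      have : ((5 ^ k : ℕ) : ZMod (2 ^ (m + 2))) = ((1 : ℕ) : ZMod (2 ^ (m + 2))) :=
        (ZMod.natCast_eq_natCast_iff _ _ _).2 h.symm
      push_cast at this; simpa using this
  obtain ⟨u, hu, h5⟩ := five_pow_two_pow m
  have hord_dvd : orderOf (5 : ZMod (2 ^ (m + 2))) ∣ 2 ^ m := by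
    apply orderOf_dvd_of_pow_eq_one
    rw [key, h5]
    simp
  obtain ⟨j, hj, hordj⟩ := (Nat.dvd_prime_pow Nat.prime_two).1 hord_dvd
  have hj' : j = m := by
    by_contra hne
    have hjm : j < m := lt_of_le_of_ne hj hne
    have : (5 : ZMod (2 ^ (m + 2))) ^ (2 ^ j) = 1 := by
      rw [← hordj]; exact pow_orderOf_eq_one _
    rw [key] at this
    obtain ⟨v, hv, h5j⟩ := five_pow_two_pow j
    rw [h5j] at this
    simp only [Nat.add_sub_cancel_left] at this
    have h2 : (2:ℕ) ^ (m + 2) ∣ 2 ^ (j + 2) := by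
      refine (Nat.Coprime.dvd_of_dvd_mul_right ?_ this)
      exact (Nat.coprime_two_left.2 hv).pow_left _
    have := (Nat.pow_dvd_pow_iff_le_right (by norm_num)).1 h2
    omega
  rw [← hj', ← hordj]
  exact orderOf_dvd_of_pow_eq_one hd

lemma irred_key (m : ℕ) (a : ZMod 5) (ha : a ^ 2 = -1) :
    Irreducible (X ^ (2 ^ m) - C a : (ZMod 5)[X]) := by
  haveI : Fact (Nat.Prime 5) := ⟨by norm_num⟩
  have hpos : 0 < 2 ^ m := Nat.pow_pos (by norm_num)
  obtain ⟨β, hβ⟩ := IsAlgClosed.exists_pow_nat_eq (algebraMap (ZMod 5) (AlgebraicClosure (ZMod 5)) a) hpos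
  have ha0 : a ≠ 0 := by
    intro h; rw [h] at ha; simp at ha
  have hβ0 : β ≠ 0 := by
    intro h
    rw [h, zero_pow hpos.ne'] at hβ
    exact ha0 ((_root_.map_eq_zero _).1 hβ.symm)
  have hint : IsIntegral (ZMod 5) β := Algebra.IsIntegral.isIntegral β
  have haev : aeval β (X ^ (2 ^ m) - C a : (ZMod 5)[X]) = 0 := by
    simp [hβ]
  have hdvd : minpoly (ZMod 5) β ∣ X ^ (2 ^ m) - C a := minpoly.dvd (ZMod 5) β haev
  have hfm : (X ^ (2 ^ m) - C a : (ZMod 5)[X]).Monic := monic_X_pow_sub_C a hpos.ne'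
  have hfdeg : (X ^ (2 ^ m) - C a : (ZMod 5)[X]).natDegree = 2 ^ m := by
    simp [natDegree_X_pow_sub_C]
  -- the adjoined field
  let K := (ZMod 5)⟮β⟯
  have hfd : FiniteDimensional (ZMod 5) K := IntermediateField.adjoin.finiteDimensional hint
  have hrank : Module.finrank (ZMod 5) K = (minpoly (ZMod 5) β).natDegree :=
    IntermediateField.adjoin.finrank hint
  set d := Module.finrank (ZMod 5) K with hd
  -- element of K
  let γ : K := IntermediateField.AdjoinSimple.gen (ZMod 5) β
  have hγpow : γ ^ (2 ^ m) = algebraMap (ZMod 5) K a := by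
    apply Subtype.ext
    push_cast
    exact hβ
  have hγ0 : γ ≠ 0 := by
    intro h
    apply hβ0
    simpa [γ] using congrArg (algebraMap K (AlgebraicClosure (ZMod 5))) h
  -- unit of order 2^(m+2)
  let u : Kˣ := Units.mk0 γ hγ0
  have hu2 : u ^ (2 ^ (m + 2)) = 1 := by
    apply Units.ext
    push_cast [u, Units.val_mk0]
    have : (2:ℕ) ^ (m + 2) = 2 ^ m * 4 := by ring
    rw [this, pow_mul, hγpow, ← map_pow]
    have : a ^ 4 = 1 := by
      have : a ^ 4 = (a ^ 2) ^ 2 := by ring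
      rw [this, ha]; ring
    rw [this, map_one]
  have hu1 : u ^ (2 ^ (m + 1)) ≠ 1 := by
    intro h
    have h' : γ ^ (2 ^ (m + 1)) = 1 := by
      have := congrArg Units.val h
      push_cast [u, Units.val_mk0] at this
      exact this
    have : (2:ℕ) ^ (m + 1) = 2 ^ m * 2 := by ring
    rw [this, pow_mul, hγpow, ← map_pow, ha] at h'
    have : algebraMap (ZMod 5) K (-1) = algebraMap (ZMod 5) K 1 := by simpa using h'
    have h2 : (-1 : ZMod 5) = 1 := (algebraMap (ZMod 5) K).injective this
    haveI : Fact (2 < 5) := ⟨by norm_num⟩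
    exact ZMod.neg_one_ne_one h2
  have hord : orderOf u = 2 ^ (m + 2) := by
    have h1 : orderOf u ∣ 2 ^ (m + 2) := orderOf_dvd_of_pow_eq_one hu2
    obtain ⟨j, hj, hordj⟩ := (Nat.dvd_prime_pow Nat.prime_two).1 h1
    have : j = m + 2 := by
      by_contra hne
      have hjm : j ≤ m + 1 := by omega
      apply hu1
      apply orderOf_dvd_iff_pow_eq_one.1
      rw [hordj]
      exact pow_dvd_pow 2 hjm
    rw [hordj, this]
  -- cardinality
  haveI : Finite K := Module.finite_of_finite (ZMod 5)
  haveI : Fintype K := Fintype.ofFinite _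
  have hcard : Nat.card K = 5 ^ d := by
    rw [Nat.card_eq_fintype_card]
    have := Module.card_eq_pow_finrank (K := (ZMod 5)) (V := K)
    simpa [ZMod.card] using this
  have hdvd_card : orderOf u ∣ Nat.card Kˣ := orderOf_dvd_natCard u
  have hcardu : Nat.card Kˣ = 5 ^ d - 1 := by
    rw [Nat.card_units, hcard]
  -- conclude 2^m ∣ d
  have hkey : (2:ℕ) ^ (m + 2) ∣ 5 ^ d - 1 := by
    rw [← hcardu, ← hord]; exact hdvd_card
  have h5d : (5 : ZMod (2 ^ (m + 2))) ^ d = 1 := by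
    have h1 : (1:ℕ) ≤ 5 ^ d := Nat.one_le_pow _ _ (by norm_num)
    have := (Nat.modEq_iff_dvd' h1).2 hkey
    have := (ZMod.natCast_eq_natCast_iff _ _ _).2 this.symm
    push_cast at this
    simpa using this
  have hmd : 2 ^ m ∣ d := two_pow_dvd_of_dvd h5d
  have hd0 : 0 < d := Module.finrank_pos
  have hge : 2 ^ m ≤ d := Nat.le_of_dvd hd0 hmd
  -- degree bound above
  have hle : (minpoly (ZMod 5) β).natDegree ≤ 2 ^ m := by
    have := Polynomial.natDegree_le_of_dvd hdvd hfm.ne_zero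
    rwa [hfdeg] at this
  have hdeq : (minpoly (ZMod 5) β).natDegree = 2 ^ m := le_antisymm hle (hrank ▸ hge)
  -- minpoly = the polynomial
  have heq : minpoly (ZMod 5) β = X ^ (2 ^ m) - C a := by
    obtain ⟨c, hc⟩ := hdvd
    have hmp := minpoly.monic hint
    have hc0 : c ≠ 0 := by
      intro h; rw [h, mul_zero] at hc; exact hfm.ne_zero hc
    have hcdeg : c.natDegree = 0 := by
      have := hfdeg
      rw [hc, Polynomial.natDegree_mul hmp.ne_zero hc0, hdeq] at this
      omega
    have hcmonic : c.Monic := by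
      have := hfm
      rw [hc] at this
      exact hmp.of_mul_monic_left this
    rw [eq_one_of_monic_natDegree_zero hcmonic hcdeg, mul_one] at hc
    exact hc.symm
  rw [← heq]
  exact minpoly.irreducible hint

theorem pow_two_pow_add_one_factorization_F5 (n : ℕ) (hn : 2 ≤ n) :
    ((X ^ (2 ^ n) + 1 : (ZMod 5)[X]) =
        (X ^ (2 ^ (n - 1)) + 2) * (X ^ (2 ^ (n - 1)) + 3)) ∧
      Irreducible (X ^ (2 ^ (n - 1)) + 2 : (ZMod 5)[X]) ∧
      Irreducible (X ^ (2 ^ (n - 1)) + 3 : (ZMod 5)[X]) := by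
  obtain ⟨k, rfl⟩ : ∃ k, n = k + 2 := ⟨n - 2, by omega⟩
  have hn1 : k + 2 - 1 = k + 1 := by omega
  rw [hn1]
  have h2 : (2:ℕ) ^ (k + 2) = 2 ^ (k + 1) + 2 ^ (k + 1) := by ring
  have e1 : (X ^ (2 ^ (k + 1)) + 2 : (ZMod 5)[X]) = X ^ (2 ^ (k + 1)) - C 3 := by
    rw [show (3 : ZMod 5) = -2 from by decide, map_neg, map_ofNat]
    ring
  have e2 : (X ^ (2 ^ (k + 1)) + 3 : (ZMod 5)[X]) = X ^ (2 ^ (k + 1)) - C 2 := by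
    rw [show (2 : ZMod 5) = -3 from by decide, map_neg, map_ofNat]
    ring
  refine ⟨?_, ?_, ?_⟩
  · have h5 : (5 : (ZMod 5)[X]) = 0 := by
      rw [← map_ofNat (C : ZMod 5 →+* (ZMod 5)[X]) 5, show (5 : ZMod 5) = 0 from by decide,
        map_zero]
    rw [h2, pow_add]
    linear_combination (-(X : (ZMod 5)[X]) ^ (2 ^ (k + 1)) - 1) * h5
  · rw [e1]; exact irred_key (k + 1) 3 (by decide)
  · rw [e2]; exact irred_key (k + 1) 2 (by decide)
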